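/- Let n ≥ 2 and let σ ∈ S_n have no fixed points, and set a = n - 1. Let Θ(X) = diag((n-1)x_{11} + c_1 x_{σ(1)σ(1)}, ..., (n-1)x_{nn} + c_n x_{σ(n)σ(n)}) - X with c_i > 0. Then the Choi matrix C_Θ = Σ_{i,j} E_{ij} ⊗ Θ(E_{ij}) has exactly one negative eigenvalue, equal to -1, and hence ‖C_Θ^-‖ = 1, where C_Θ = C_Θ^+ - C_Θ^- is the Jordan decomposition into positive and negative parts. -/

import Mathlib

open Finset Matrix
open scoped Kronecker ComplexOrder Matrix.Norms.L2Operator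

/-- The map `Θ^{(n,σ)}[a; c₁,…,c_n]` on `n × n` complex matrices. -/
def ThetaMap (n : ℕ) (σ : Equiv.Perm (Fin n)) (a : ℝ) (c : Fin n → ℝ)
    (X : Matrix (Fin n) (Fin n) ℂ) : Matrix (Fin n) (Fin n) ℂ :=
  Matrix.diagonal (fun i => (a : ℂ) * X i i + (c i : ℂ) * X (σ i) (σ i)) - X

/-- The Choi matrix of `Θ^{(n,σ)}[a; c₁,…,c_n]`. -/
noncomputable def ChoiMatrix (n : ℕ) (σ : Equiv.Perm (Fin n)) (a : ℝ) (c : Fin n → ℝ) :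
    Matrix (Fin n × Fin n) (Fin n × Fin n) ℂ :=
  ∑ i, ∑ j, (Matrix.single i j (1 : ℂ)) ⊗ₖ
    ThetaMap n σ a c (Matrix.single i j (1 : ℂ))

noncomputable section Stmt16Aux

/-- Indicator vector of the "diagonal" index pairs. -/
def uvec (n : ℕ) : Fin n × Fin n → ℂ := fun p => if p.1 = p.2 then 1 else 0

/-- Diagonal coefficients coming from the `c i` terms. -/
def dv (n : ℕ) (σ : Equiv.Perm (Fin n)) (c : Fin n → ℝ) : Fin n × Fin n → ℂ :=
  fun p => if σ p.2 = p.1 then (c p.2 : ℂ) else 0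

/-- Rank one matrix `u uᵀ`. -/
def Wm (n : ℕ) : Matrix (Fin n × Fin n) (Fin n × Fin n) ℂ :=
  Matrix.vecMulVec (uvec n) (uvec n)

/-- Projection-like matrix. -/
def Qm (n : ℕ) : Matrix (Fin n × Fin n) (Fin n × Fin n) ℂ :=
  Matrix.diagonal (uvec n) - ((n : ℂ)⁻¹) • Wm n

lemma star_uvec (n : ℕ) : star (uvec n) = uvec n := by
  funext p; simp only [Pi.star_apply, uvec]; split_ifs <;> simp

lemma uvec_dot (n : ℕ) : uvec n ⬝ᵥ uvec n = (n : ℂ) := by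
  simp [dotProduct, uvec, Fintype.sum_prod_type, Finset.sum_ite_eq, ite_and, apply_ite]

lemma Wm_mulVec (n : ℕ) (x : Fin n × Fin n → ℂ) :
    Wm n *ᵥ x = (uvec n ⬝ᵥ x) • uvec n := by
  funext p
  simp [Wm, Matrix.mulVec, Matrix.vecMulVec_apply, dotProduct, Finset.mul_sum, mul_comm,
    mul_left_comm]

lemma diag_uvec_mul_W (n : ℕ) : Matrix.diagonal (uvec n) * Wm n = Wm n := by
  ext p q
  simp only [Matrix.diagonal_mul, Wm, Matrix.vecMulVec_apply]
  rcases eq_or_ne p.1 p.2 with h | h <;> simp [uvec, h]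

lemma W_mul_diag_uvec (n : ℕ) : Wm n * Matrix.diagonal (uvec n) = Wm n := by
  ext p q
  simp only [Matrix.mul_diagonal, Wm, Matrix.vecMulVec_apply]
  rcases eq_or_ne q.1 q.2 with h | h <;> simp [uvec, h]

lemma W_mul_W (n : ℕ) : Wm n * Wm n = (n : ℂ) • Wm n := by
  ext p q
  simp only [Matrix.mul_apply, Wm, Matrix.vecMulVec_apply, Matrix.smul_apply, smul_eq_mul]
  calc ∑ r, uvec n p * uvec n r * (uvec n r * uvec n q)
      = (uvec n ⬝ᵥ uvec n) * (uvec n p * uvec n q) := by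
        simp only [dotProduct, Finset.sum_mul]
        refine Finset.sum_congr rfl fun r _ => by ring
    _ = (n : ℂ) * (uvec n p * uvec n q) := by rw [uvec_dot]

lemma diag_uvec_sq (n : ℕ) :
    Matrix.diagonal (uvec n) * Matrix.diagonal (uvec n) = Matrix.diagonal (uvec n) := by
  rw [Matrix.diagonal_mul_diagonal]
  have h : (fun p => uvec n p * uvec n p) = uvec n := by
    funext p; simp only [uvec]; split_ifs <;> simp
  rw [h]

lemma W_herm (n : ℕ) : (Wm n)ᴴ = Wm n := by
  ext p q
  simp only [Matrix.conjTranspose_apply, Wm, Matrix.vecMulVec_apply, uvec]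
  split_ifs <;> simp

lemma diag_uvec_herm (n : ℕ) : (Matrix.diagonal (uvec n))ᴴ = Matrix.diagonal (uvec n) := by
  rw [Matrix.diagonal_conjTranspose]
  exact congrArg _ (star_uvec n)

lemma Q_herm (n : ℕ) : (Qm n)ᴴ = Qm n := by
  rw [Qm, Matrix.conjTranspose_sub, Matrix.conjTranspose_smul, diag_uvec_herm, W_herm]
  congr 1
  simp

lemma Q_idem (n : ℕ) (hn : n ≠ 0) : Qm n * Qm n = Qm n := by
  have hnC : (n : ℂ) ≠ 0 := Nat.cast_ne_zero.mpr hn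
  rw [Qm, Matrix.sub_mul, Matrix.mul_sub, Matrix.mul_sub, Matrix.smul_mul, Matrix.mul_smul,
    Matrix.mul_smul, Matrix.smul_mul, diag_uvec_sq, diag_uvec_mul_W, W_mul_diag_uvec, W_mul_W,
    smul_smul, smul_smul]
  have h : (n:ℂ)⁻¹ * (n:ℂ)⁻¹ * (n:ℂ) = (n:ℂ)⁻¹ := by field_simp
  rw [h]
  abel

lemma Q_smul_psd (n : ℕ) (hn : 1 ≤ n) : (((n : ℂ) - 1) • Qm n).PosSemidef := by
  have h1 : (1:ℝ) ≤ (n:ℝ) := by exact_mod_cast hn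
  set s : ℂ := ((Real.sqrt ((n : ℝ) - 1) : ℝ) : ℂ) with hs
  have key : ((s • Qm n)ᴴ) * (s • Qm n) = ((n : ℂ) - 1) • Qm n := by
    rw [Matrix.conjTranspose_smul, Q_herm, Matrix.smul_mul, Matrix.mul_smul, smul_smul,
      Q_idem n (by omega)]
    congr 1
    rw [hs, Complex.star_def, Complex.conj_ofReal, ← Complex.ofReal_mul,
      Real.mul_self_sqrt (by linarith)]
    push_cast
    ring
  rw [← key]
  exact Matrix.posSemidef_conjTranspose_mul_self _

lemma choi_apply (n : ℕ) (σ : Equiv.Perm (Fin n)) (a : ℝ) (c : Fin n → ℝ)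
    (i k j l : Fin n) : ChoiMatrix n σ a c (i,k) (j,l) =
      ThetaMap n σ a c (Matrix.single i j 1) k l := by
  simp [ChoiMatrix, Matrix.sum_apply, kroneckerMap_apply, Matrix.single,
    Finset.sum_ite_eq, ite_and]

lemma choi_decomp (n : ℕ) (σ : Equiv.Perm (Fin n)) (c : Fin n → ℝ) :
    ChoiMatrix n σ ((n : ℝ) - 1) c
      = ((n : ℂ) - 1) • Matrix.diagonal (uvec n) + Matrix.diagonal (dv n σ c) - Wm n := by
  ext ⟨i, k⟩ ⟨j, l⟩
  rw [choi_apply]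
  simp only [ThetaMap, Wm, Matrix.sub_apply, Matrix.add_apply, Matrix.smul_apply,
    Matrix.diagonal_apply, Matrix.vecMulVec_apply, uvec, dv, Matrix.single,
    Matrix.of_apply, smul_eq_mul]
  push_cast
  by_cases hpq : (i, k) = (j, l)
  · obtain ⟨hij, hkl⟩ := Prod.mk.injEq .. ▸ hpq
    subst hij; subst hkl
    simp only [if_pos rfl, and_self]
    by_cases hik : i = k
    · subst hik
      by_cases hsk : σ i = i
      · simp [hsk, eq_comm]
      · have h' : ¬ i = σ i := fun h => hsk h.symm
        simp [hsk, h']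
    · by_cases hsk : σ k = i
      · subst hsk
        simp [hik]
      · have h' : ¬ i = σ k := fun h => hsk h.symm
        simp [hik, hsk, h', Ne.symm hik]
  · rw [if_neg hpq, if_neg hpq]
    by_cases hkl : k = l
    · subst hkl
      have hij : ¬ i = j := fun h => hpq (by rw [h])
      have h1 : ¬ (i = k ∧ j = k) := fun ⟨h, h'⟩ => hij (h.trans h'.symm)
      have h2 : ¬ (i = σ k ∧ j = σ k) := fun ⟨h, h'⟩ => hij (h.trans h'.symm)
      simp only [if_pos rfl, if_neg h1, if_neg h2, mul_zero, add_zero, zero_sub]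
      by_cases hik : i = k
      · have : ¬ j = k := fun h => h1 ⟨hik, h⟩
        simp [hik, this]
      · simp [hik]
    · rw [if_neg hkl]
      by_cases h : i = k ∧ j = l
      · simp [h.1, h.2]
      · rw [if_neg h]
        rcases not_and_or.mp h with h' | h' <;> simp [h']

lemma choi_mulVec_uvec (n : ℕ) (σ : Equiv.Perm (Fin n)) (c : Fin n → ℝ)
    (hσ : ∀ i, σ i ≠ i) :
    ChoiMatrix n σ ((n : ℝ) - 1) c *ᵥ uvec n = ((-1 : ℝ) : ℂ) • uvec n := by
  rw [choi_decomp]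
  have h1 : Matrix.diagonal (uvec n) *ᵥ uvec n = uvec n := by
    funext p
    rw [Matrix.mulVec_diagonal]
    simp only [uvec]
    split_ifs <;> simp
  have h2 : Matrix.diagonal (dv n σ c) *ᵥ uvec n = 0 := by
    funext p
    rw [Matrix.mulVec_diagonal]
    simp only [dv, uvec]
    rcases eq_or_ne p.1 p.2 with h | h
    · have : ¬ σ p.2 = p.1 := fun hh => hσ p.2 (hh.trans h)
      simp [this]
    · simp [h]
  have h3 : Wm n *ᵥ uvec n = (n : ℂ) • uvec n := by rw [Wm_mulVec, uvec_dot]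
  rw [Matrix.sub_mulVec, Matrix.add_mulVec, Matrix.smul_mulVec, h1, h2, h3, add_zero]
  push_cast
  module

lemma N_psd (n : ℕ) (σ : Equiv.Perm (Fin n)) (c : Fin n → ℝ) (hn : 1 ≤ n)
    (hc : ∀ i, 0 < c i) :
    (ChoiMatrix n σ ((n : ℝ) - 1) c + (n : ℂ)⁻¹ • Wm n).PosSemidef := by
  have hnC : (n : ℂ) ≠ 0 := Nat.cast_ne_zero.mpr (by omega)
  have hEq : ChoiMatrix n σ ((n : ℝ) - 1) c + (n : ℂ)⁻¹ • Wm n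
      = ((n : ℂ) - 1) • Qm n + Matrix.diagonal (dv n σ c) := by
    have hsc : ((n:ℂ) - 1) * (n:ℂ)⁻¹ = 1 - (n:ℂ)⁻¹ := by field_simp
    rw [choi_decomp, Qm, smul_sub, smul_smul, hsc, sub_smul, one_smul]
    module
  rw [hEq]
  refine (Q_smul_psd n hn).add (Matrix.PosSemidef.diagonal ?_)
  intro p
  simp only [dv, Pi.zero_apply]
  split_ifs
  · exact_mod_cast (hc _).le
  · exact le_refl 0

lemma herm_package {m : Type*} [Fintype m] [DecidableEq m] {A : Matrix m m ℂ}
    (hA : A.IsHermitian) :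
    ∃ v : m → m → ℂ,
      (∀ p, A *ᵥ v p = (hA.eigenvalues p : ℂ) • v p) ∧
      (∀ p q, star (v p) ⬝ᵥ v q = if p = q then 1 else 0) ∧
      (∀ (t : ℝ) (w : m → ℂ), w ≠ 0 → A *ᵥ w = (t : ℂ) • w → ∃ p, hA.eigenvalues p = t) := by
  refine ⟨fun p => ⇑(hA.eigenvectorBasis p), fun p => ?_, fun p q => ?_, fun t w hw hAw => ?_⟩
  · have h := hA.mulVec_eigenvectorBasis p
    rw [h]
    funext r
    simp [Complex.real_smul]
  · have h := hA.eigenvectorBasis.orthonormal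
    rw [orthonormal_iff_ite] at h
    have h' := h p q
    rw [EuclideanSpace.inner_eq_star_dotProduct] at h'
    rwa [dotProduct_comm] at h'
  · by_contra hcon
    push_neg at hcon
    set U : Matrix m m ℂ := (hA.eigenvectorUnitary : Matrix m m ℂ) with hU
    have hcoord : ∀ p, star (⇑(hA.eigenvectorBasis p)) ⬝ᵥ w = 0 := by
      intro p
      have h1 : star (⇑(hA.eigenvectorBasis p)) ⬝ᵥ (A *ᵥ w)
          = (t : ℂ) * (star (⇑(hA.eigenvectorBasis p)) ⬝ᵥ w) := by
        rw [hAw, dotProduct_smul, smul_eq_mul]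
      have h2 : star (⇑(hA.eigenvectorBasis p)) ⬝ᵥ (A *ᵥ w)
          = (hA.eigenvalues p : ℂ) * (star (⇑(hA.eigenvectorBasis p)) ⬝ᵥ w) := by
        rw [Matrix.dotProduct_mulVec]
        have h3 : star (⇑(hA.eigenvectorBasis p)) ᵥ* A
            = star (A *ᵥ ⇑(hA.eigenvectorBasis p)) := by
          rw [Matrix.star_mulVec, hA.eq]
        rw [h3, hA.mulVec_eigenvectorBasis, star_smul, smul_dotProduct]
        simp [Complex.real_smul]
      have h4 : ((t : ℂ) - (hA.eigenvalues p : ℂ))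
          * (star (⇑(hA.eigenvectorBasis p)) ⬝ᵥ w) = 0 := by
        rw [sub_mul, ← h1, ← h2, sub_self]
      rcases mul_eq_zero.mp h4 with h5 | h5
      · have h6 : (t : ℂ) = (hA.eigenvalues p : ℂ) := sub_eq_zero.mp h5
        have h7 : hA.eigenvalues p = t := by exact_mod_cast h6.symm
        exact absurd h7 (hcon p)
      · exact h5
    have hsU : star U *ᵥ w = 0 := by
      funext p
      rw [Pi.zero_apply, ← hcoord p]
      simp only [Matrix.mulVec, dotProduct, Matrix.star_apply, Pi.star_apply]
      exact Finset.sum_congr rfl fun r _ => by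
        rw [hU, Matrix.IsHermitian.eigenvectorUnitary_apply]
    have hww : w = U *ᵥ (star U *ᵥ w) := by
      rw [Matrix.mulVec_mulVec, Matrix.mem_unitaryGroup_iff.mp hA.eigenvectorUnitary.2,
        Matrix.one_mulVec]
    rw [hsU, Matrix.mulVec_zero] at hww
    exact hw hww

end Stmt16Aux

theorem stmt16 (n : ℕ) (hn : 2 ≤ n) (σ : Equiv.Perm (Fin n)) (hσ : ∀ i, σ i ≠ i)
    (c : Fin n → ℝ) (hc : ∀ i, 0 < c i)
    (hC : (ChoiMatrix n σ ((n : ℝ) - 1) c).IsHermitian) :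
    (∃! p : Fin n × Fin n, hC.eigenvalues p < 0) ∧
    (∀ p : Fin n × Fin n, hC.eigenvalues p < 0 → hC.eigenvalues p = -1) ∧
    (∀ Cp Cm : Matrix (Fin n × Fin n) (Fin n × Fin n) ℂ,
      Cp.PosSemidef → Cm.PosSemidef → ChoiMatrix n σ ((n : ℝ) - 1) c = Cp - Cm →
      Cp * Cm = 0 → ‖Cm‖ = 1) := by
  have hn1 : 1 ≤ n := by omega
  have hnC : (n : ℂ) ≠ 0 := Nat.cast_ne_zero.mpr (by omega)
  obtain ⟨v, hv1, hv2, hv3⟩ := herm_package hC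
  have hune : uvec n ≠ 0 := by
    intro h
    have := congrFun h ((⟨0, by omega⟩ : Fin n), (⟨0, by omega⟩ : Fin n))
    simp [uvec] at this
  have hCu := choi_mulVec_uvec n σ c hσ
  obtain ⟨p₀, hp₀⟩ := hv3 (-1) (uvec n) hune hCu
  have hNpsd := N_psd n σ c hn1 hc
  -- quadratic form facts
  have hzero : ∀ x : Fin n × Fin n → ℂ, uvec n ⬝ᵥ x = 0 →
      0 ≤ star x ⬝ᵥ (ChoiMatrix n σ ((n : ℝ) - 1) c *ᵥ x) := by
    intro x hx
    have h := hNpsd.dotProduct_mulVec_nonneg x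
    rwa [Matrix.add_mulVec, Matrix.smul_mulVec, Wm_mulVec, hx, zero_smul, smul_zero,
      add_zero] at h
  -- any two negative eigenvalue indices coincide
  have key : ∀ p q, hC.eigenvalues p < 0 → hC.eigenvalues q < 0 → p = q := by
    intro p q hp hq
    by_contra hpq
    set a : ℂ := uvec n ⬝ᵥ v q with ha
    set b : ℂ := uvec n ⬝ᵥ v p with hb
    have quad_diag : ∀ r, star (v r) ⬝ᵥ (ChoiMatrix n σ ((n : ℝ) - 1) c *ᵥ v r)
        = ((hC.eigenvalues r : ℝ) : ℂ) := by
      intro r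
      rw [hv1 r, dotProduct_smul, hv2 r r, if_pos rfl, smul_eq_mul, mul_one]
    by_cases hb0 : b = 0
    · have h := hzero (v p) (hb ▸ hb0 ▸ hb0)
      rw [quad_diag p] at h
      have : (0:ℝ) ≤ hC.eigenvalues p := by exact_mod_cast h
      exact absurd this (not_le.mpr hp)
    · set x : Fin n × Fin n → ℂ := a • v p - b • v q with hx
      have hux : uvec n ⬝ᵥ x = 0 := by
        rw [hx, dotProduct_sub, dotProduct_smul, dotProduct_smul, ← ha, ← hb]
        simp [smul_eq_mul]
        ring
      have h := hzero x hux
      have hval : star x ⬝ᵥ (ChoiMatrix n σ ((n : ℝ) - 1) c *ᵥ x)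
          = ((Complex.normSq a * hC.eigenvalues p
              + Complex.normSq b * hC.eigenvalues q : ℝ) : ℂ) := by
        rw [hx]
        rw [Matrix.mulVec_sub, Matrix.mulVec_smul, Matrix.mulVec_smul, hv1 p, hv1 q]
        rw [star_sub, star_smul, star_smul]
        simp only [sub_dotProduct, dotProduct_sub, smul_dotProduct, dotProduct_smul,
          hv2, smul_eq_mul, if_true, eq_self_iff_true, if_neg hpq, if_neg (Ne.symm hpq),
          Complex.star_def, mul_zero, mul_one, zero_sub, sub_zero, mul_neg]
        push_cast
        rw [Complex.normSq_eq_conj_mul_self, Complex.normSq_eq_conj_mul_self]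
        ring
      rw [hval] at h
      have h' : (0:ℝ) ≤ Complex.normSq a * hC.eigenvalues p
          + Complex.normSq b * hC.eigenvalues q := by exact_mod_cast h
      have hb' : 0 < Complex.normSq b := Complex.normSq_pos.mpr hb0
      nlinarith [Complex.normSq_nonneg a]
  have hp₀neg : hC.eigenvalues p₀ < 0 := by rw [hp₀]; norm_num
  have part2 : ∀ p : Fin n × Fin n, hC.eigenvalues p < 0 → hC.eigenvalues p = -1 := by
    intro p hp
    rw [key p p₀ hp hp₀neg]
    exact hp₀
  refine ⟨⟨p₀, hp₀neg, fun q hq => key q p₀ hq hp₀neg⟩, part2, ?_⟩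
  -- third part
  intro Cp Cm hCp hCm hsum hmul
  have hCmH : Cm.IsHermitian := hCm.1
  have hstaru : star (uvec n) ⬝ᵥ uvec n = (n : ℂ) := by rw [star_uvec, uvec_dot]
  have hCm0 : Cm ≠ 0 := by
    intro h0
    rw [h0, sub_zero] at hsum
    have h := hCp.dotProduct_mulVec_nonneg (uvec n)
    rw [← hsum, hCu, dotProduct_smul, hstaru, smul_eq_mul] at h
    have : (0:ℝ) ≤ (-1) * n := by exact_mod_cast h
    have : (0:ℝ) < n := by exact_mod_cast (by omega : 0 < n)
    linarith
  obtain ⟨w, hw1, hw2, _⟩ := herm_package hCmH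
  have heig : ∀ q, hCmH.eigenvalues q = 0 ∨ hCmH.eigenvalues q = 1 := by
    intro q
    rcases eq_or_ne (hCmH.eigenvalues q) 0 with h | h
    · exact Or.inl h
    · right
      set μ : ℝ := hCmH.eigenvalues q with hμ
      have hμC : (μ : ℂ) ≠ 0 := by exact_mod_cast h
      have hwq : w q ≠ 0 := by
        intro hzero'
        have := hw2 q q
        rw [hzero', if_pos rfl] at this
        simp at this
      have hCp0 : Cp *ᵥ w q = 0 := by
        have h1 : Cp *ᵥ (Cm *ᵥ w q) = 0 := by
          rw [Matrix.mulVec_mulVec, hmul, Matrix.zero_mulVec]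
        rw [hw1 q, Matrix.mulVec_smul] at h1
        exact (smul_eq_zero.mp h1).resolve_left hμC
      have hCw : ChoiMatrix n σ ((n : ℝ) - 1) c *ᵥ w q = ((-μ : ℝ) : ℂ) • w q := by
        rw [hsum, Matrix.sub_mulVec, hCp0, hw1 q, zero_sub]
        push_cast
        rw [neg_smul]
      obtain ⟨p, hp⟩ := hv3 (-μ) (w q) hwq hCw
      have hμnn : 0 ≤ μ := hCm.eigenvalues_nonneg q
      have hμpos : 0 < μ := lt_of_le_of_ne hμnn (Ne.symm h)
      have hpneg : hC.eigenvalues p < 0 := by rw [hp]; linarith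
      have := part2 p hpneg
      rw [hp] at this
      linarith [this]
  -- Cm is idempotent
  have hidem : Cm * Cm = Cm := by
    have hs := hCmH.spectral_theorem
    set U' : Matrix (Fin n × Fin n) (Fin n × Fin n) ℂ :=
      (hCmH.eigenvectorUnitary : Matrix (Fin n × Fin n) (Fin n × Fin n) ℂ) with hU'
    set D : Matrix (Fin n × Fin n) (Fin n × Fin n) ℂ :=
      Matrix.diagonal (RCLike.ofReal ∘ hCmH.eigenvalues) with hD
    have hUU : star U' * U' = 1 := by
      exact Matrix.UnitaryGroup.star_mul_self _
    have hDD : D * D = D := by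
      have hf : (fun q => (RCLike.ofReal ∘ hCmH.eigenvalues) q * (RCLike.ofReal ∘ hCmH.eigenvalues) q)
          = (RCLike.ofReal ∘ hCmH.eigenvalues : Fin n × Fin n → ℂ) := by
        funext q
        rcases heig q with h | h <;> simp [Function.comp, h]
      rw [hD, Matrix.diagonal_mul_diagonal, hf]
    calc Cm * Cm = (U' * D * star U') * (U' * D * star U') := by exact congrArg (fun X => X * X) hs
      _ = U' * D * (star U' * U') * D * star U' := by
          simp only [Matrix.mul_assoc]
      _ = U' * (D * D) * star U' := by rw [hUU]; simp only [Matrix.mul_assoc, Matrix.mul_one]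
      _ = U' * D * star U' := by rw [hDD, Matrix.mul_assoc]
      _ = Cm := hs.symm
  -- conclude via C*-norm
  have hsq : ‖Cm‖ * ‖Cm‖ = ‖Cm‖ := by
    have h := CStarRing.norm_star_mul_self (x := Cm)
    rw [Matrix.star_eq_conjTranspose, hCmH.eq, hidem] at h
    exact h.symm
  have h0 : ‖Cm‖ ≠ 0 := norm_ne_zero_iff.mpr hCm0
  have := mul_right_cancel₀ h0 (by rw [hsq, one_mul] : ‖Cm‖ * ‖Cm‖ = 1 * ‖Cm‖)
  exact this
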